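/- For the boxworld matrix C (4×4, rank 3), any polytope spanned by columns of a 4×k column-stochastic matrix R whose column space equals the column space of C and whose convex hull contains all columns of C must contain each column of C as a vertex; consequently, the only nonnegative factorization C = RP with rank(R) = 3 and R column stochastic (up to permutation and scaling of columns) has R's columns equal to the columns of (1/2)·C, forcing rank(P) = 4 > 3. -/

import Mathlib

open Matrix

namespace BoxworldAux

noncomputable def phi : (Fin 4 → ℝ) →ₗ[ℝ] ℝ :=
  (LinearMap.proj 0 : (Fin 4 → ℝ) →ₗ[ℝ] ℝ) + (LinearMap.proj 1 : (Fin 4 → ℝ) →ₗ[ℝ] ℝ)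
    - (LinearMap.proj 2 : (Fin 4 → ℝ) →ₗ[ℝ] ℝ) - (LinearMap.proj 3 : (Fin 4 → ℝ) →ₗ[ℝ] ℝ)

lemma phi_apply (x : Fin 4 → ℝ) : phi x = x 0 + x 1 - x 2 - x 3 := rfl

def Cmat : Matrix (Fin 4) (Fin 4) ℝ := !![1,0,0,1; 0,1,1,0; 1,0,1,0; 0,1,0,1]

lemma range_C : LinearMap.range Cmat.mulVecLin = LinearMap.ker phi := by
  apply le_antisymm
  · rintro x ⟨v, rfl⟩
    simp only [LinearMap.mem_ker, phi_apply, mulVecLin_apply]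
    simp [Cmat, mulVec, dotProduct, Fin.sum_univ_four]
    ring
  · intro x hx
    rw [LinearMap.mem_ker, phi_apply] at hx
    refine ⟨![x 0, x 3, x 1 - x 3, 0], ?_⟩
    funext i
    fin_cases i <;>
      simp [mulVecLin_apply, Cmat, mulVec, dotProduct, Fin.sum_univ_four] <;> linarith

lemma finrank_ker_phi : Module.finrank ℝ (LinearMap.ker phi) = 3 := by
  have hsurj : Function.Surjective phi := by
    intro c
    refine ⟨fun i => if i = 0 then c else 0, ?_⟩
    simp [phi_apply]
  have h := LinearMap.finrank_range_add_finrank_ker phi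
  rw [LinearMap.range_eq_top.mpr hsurj] at h
  simp [Module.finrank_fin_fun, finrank_top] at h
  omega

lemma core {ι : Type*} (s : Finset ι) (w : ι → ℝ) (z : ι → Fin 4 → ℝ) (j : Fin 4)
    (hw : ∀ i ∈ s, 0 ≤ w i)
    (hz : ∀ i ∈ s, (∀ m, 0 ≤ z i m) ∧ z i 0 + z i 1 = 1/2 ∧ z i 2 + z i 3 = 1/2)
    (hcm : ∀ m, ∑ i ∈ s, w i * z i m = Cmat m j / 2) :
    ∀ i ∈ s, 0 < w i → z i = fun m => Cmat m j / 2 := by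
  intro i hi hwi
  have hzero : ∀ m, Cmat m j = 0 → z i m = 0 := by
    intro m hm
    have h0 : ∑ i ∈ s, w i * z i m = 0 := by rw [hcm m, hm]; ring
    have h1 := (Finset.sum_eq_zero_iff_of_nonneg
      (fun i hi => mul_nonneg (hw i hi) ((hz i hi).1 m))).mp h0 i hi
    rcases mul_eq_zero.mp h1 with h | h
    · exact absurd h (ne_of_gt hwi)
    · exact h
  obtain ⟨hnn, h01, h23⟩ := hz i hi
  funext m
  fin_cases j
  · have a := hzero 1 (by norm_num [Cmat])
    have b := hzero 3 (by norm_num [Cmat]; rfl)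
    fin_cases m <;> simp [Cmat] <;> linarith
  · have a := hzero 0 (by norm_num [Cmat])
    have b := hzero 2 (by norm_num [Cmat]; rfl)
    fin_cases m <;> simp [Cmat] <;> linarith
  · have a := hzero 0 (by norm_num [Cmat])
    have b := hzero 3 (by norm_num [Cmat]; rfl)
    fin_cases m <;> simp [Cmat] <;> linarith
  · have a := hzero 1 (by norm_num [Cmat])
    have b := hzero 2 (by norm_num [Cmat]; rfl)
    fin_cases m <;> simp [Cmat] <;> linarith

-- columns of R lie in ker phi and are stochastic ⇒ pair sums are 1/2
lemma col_props {k : ℕ} (R : Matrix (Fin 4) (Fin k) ℝ)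
    (hRnn : ∀ i j, 0 ≤ R i j) (hRs : ∀ j, ∑ i, R i j = 1)
    (hrange : LinearMap.range R.mulVecLin = LinearMap.ker phi) (t : Fin k) :
    (∀ m, 0 ≤ R m t) ∧ R 0 t + R 1 t = 1/2 ∧ R 2 t + R 3 t = 1/2 := by
  have hmem : (fun i => R i t) ∈ LinearMap.range R.mulVecLin := by
    refine ⟨Pi.single t 1, ?_⟩
    funext i
    simp [mulVecLin_apply, mulVec_single]
  rw [hrange, LinearMap.mem_ker, phi_apply] at hmem
  have hs := hRs t
  rw [Fin.sum_univ_four] at hs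
  exact ⟨fun m => hRnn m t, by linarith, by linarith⟩

end BoxworldAux

open BoxworldAux

/-- Geometric rank separation for boxworld. Part 1: any column-stochastic
matrix `R` whose column space equals that of `C` and whose columns' convex
hull contains every (normalized) column of `C` must contain each normalized
column of `C` among its columns (as a vertex). Part 2: consequently, in any
nonnegative factorization `C = R * P` with `R` column stochastic and
`rank R = 3`, the columns of `(1/2) • C` all occur among the columns of `R`,
and `rank P = 4 > 3`. -/
theorem boxworld_geometric_rank_separation
    (C : Matrix (Fin 4) (Fin 4) ℝ)
    (hC : C = !![1,0,0,1; 0,1,1,0; 1,0,1,0; 0,1,0,1]) :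
    (∀ (k : ℕ) (R : Matrix (Fin 4) (Fin k) ℝ),
      (∀ i j, 0 ≤ R i j) → (∀ j, ∑ i, R i j = 1) →
      LinearMap.range R.mulVecLin = LinearMap.range C.mulVecLin →
      (∀ j : Fin 4, (fun i => C i j / 2) ∈
        convexHull ℝ (Set.range (fun t => fun i => R i t))) →
      ∀ j : Fin 4, ∃ t : Fin k, (fun i => R i t) = fun i => C i j / 2) ∧
    (∀ (k : ℕ) (R : Matrix (Fin 4) (Fin k) ℝ) (P : Matrix (Fin k) (Fin 4) ℝ),
      (∀ i j, 0 ≤ R i j) → (∀ j, ∑ i, R i j = 1) →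
      (∀ i j, 0 ≤ P i j) → C = R * P → R.rank = 3 →
      (∀ j : Fin 4, ∃ t : Fin k, (fun i => R i t) = fun i => C i j / 2) ∧
        P.rank = 4 ∧ 3 < P.rank) := by
  have hCC : C = Cmat := hC
  have hCrange : LinearMap.range C.mulVecLin = LinearMap.ker phi := by
    rw [hCC]; exact range_C
  constructor
  · -- Part 1
    intro k R hRnn hRs hrange hhull j
    rw [hCrange] at hrange
    have hhj := hhull j
    rw [convexHull_eq] at hhj
    obtain ⟨ι, s, w, z, hw, hw1, hzs, hcm⟩ := hhj
    have hcm' : ∀ m, ∑ i ∈ s, w i * z i m = Cmat m j / 2 := by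
      intro m
      have h := congrFun ((Finset.centerMass_eq_of_sum_1 s z hw1).symm.trans hcm) m
      rw [← hCC]
      simpa [Finset.sum_apply] using h
    have hzprop : ∀ i ∈ s, (∀ m, 0 ≤ z i m) ∧ z i 0 + z i 1 = 1/2 ∧ z i 2 + z i 3 = 1/2 := by
      intro i hi
      obtain ⟨t, ht⟩ := hzs i hi
      rw [← ht]
      exact col_props R hRnn hRs hrange t
    obtain ⟨i, hi, hwi⟩ := Finset.exists_ne_zero_of_sum_ne_zero (by rw [hw1]; norm_num : ∑ i ∈ s, w i ≠ 0)
    have hwi' : 0 < w i := lt_of_le_of_ne (hw i hi) (Ne.symm hwi)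
    have hzi := core s w z j hw hzprop hcm' i hi hwi'
    obtain ⟨t, ht⟩ := hzs i hi
    refine ⟨t, ?_⟩
    rw [hCC, ← hzi]
    exact ht
  · -- Part 2
    intro k R P hRnn hRs hPnn hfac hrankR
    have hCle : LinearMap.range C.mulVecLin ≤ LinearMap.range R.mulVecLin := by
      rw [hfac, mulVecLin_mul]
      exact LinearMap.range_comp_le_range _ _
    have hfr : Module.finrank ℝ (LinearMap.range C.mulVecLin) = 3 := by
      rw [hCrange]; exact finrank_ker_phi
    have hrankR' : Module.finrank ℝ (LinearMap.range R.mulVecLin) = 3 := hrankR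
    have hRr : LinearMap.range R.mulVecLin = LinearMap.ker phi := by
      rw [← hCrange]
      exact (Submodule.eq_of_le_of_finrank_eq hCle (by rw [hfr, hrankR'])).symm
    -- column sums of P are 2
    have hPsum : ∀ j, ∑ t, P t j = 2 := by
      intro j
      have hCsum : ∑ i, C i j = 2 := by
        rw [hCC]; fin_cases j <;> simp [Cmat, Fin.sum_univ_four] <;> norm_num
      calc ∑ t, P t j = ∑ t, (∑ i, R i t) * P t j := by
            refine Finset.sum_congr rfl fun t _ => ?_
            rw [hRs t, one_mul]
        _ = ∑ t, ∑ i, R i t * P t j := by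
            refine Finset.sum_congr rfl fun t _ => ?_
            rw [Finset.sum_mul]
        _ = ∑ i, ∑ t, R i t * P t j := Finset.sum_comm
        _ = ∑ i, C i j := by
            refine Finset.sum_congr rfl fun i _ => ?_
            rw [hfac, Matrix.mul_apply]
        _ = 2 := hCsum
    -- key: positive entries of P pick out vertex columns
    have hkey : ∀ (j : Fin 4) (t : Fin k), 0 < P t j →
        (fun m => R m t) = fun m => Cmat m j / 2 := by
      intro j t ht
      have hcm' : ∀ m, ∑ t, (P t j / 2) * R m t = Cmat m j / 2 := by
        intro m
        have : ∑ t, (P t j / 2) * R m t = (∑ t, R m t * P t j) / 2 := by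
          rw [Finset.sum_div]
          exact Finset.sum_congr rfl fun t _ => by ring
        rw [this, ← Matrix.mul_apply, ← hfac, hCC]
      exact core Finset.univ (fun t => P t j / 2) (fun t m => R m t) j
        (fun t _ => div_nonneg (hPnn t j) (by norm_num))
        (fun t _ => col_props R hRnn hRs hRr t)
        hcm' t (Finset.mem_univ t) (half_pos ht)
    -- witnesses
    have hwit : ∀ j : Fin 4, ∃ t, 0 < P t j ∧ (fun m => R m t) = fun m => Cmat m j / 2 := by
      intro j
      obtain ⟨t, _, htne⟩ := Finset.exists_ne_zero_of_sum_ne_zero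
        (by rw [hPsum j]; norm_num : ∑ t, P t j ≠ 0)
      have htpos : 0 < P t j := lt_of_le_of_ne (hPnn t j) (Ne.symm htne)
      exact ⟨t, htpos, hkey j t htpos⟩
    refine ⟨fun j => (hwit j).elim fun t ht => ⟨t, by rw [ht.2, hCC]⟩, ?_⟩
    -- injectivity of P.mulVecLin
    have hinj : LinearMap.ker P.mulVecLin = ⊥ := by
      rw [LinearMap.ker_eq_bot']
      intro v hv
      funext j
      obtain ⟨t, htpos, htcol⟩ := hwit j
      have hz' : ∀ j', j' ≠ j → P t j' = 0 := by
        intro j' hne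
        by_contra hp
        have hp' : 0 < P t j' := lt_of_le_of_ne (hPnn t j') (Ne.symm hp)
        have hcc : (fun m => Cmat m j / 2) = (fun m => Cmat m j' / 2) := by
          rw [← htcol, hkey j' t hp']
        have h0 := congrFun hcc 0
        have h2 := congrFun hcc 2
        fin_cases j <;> fin_cases j' <;> simp_all [Cmat]
      have hveq : ∑ j', P t j' * v j' = 0 := by
        have := congrFun hv t
        simpa [mulVecLin_apply, mulVec, dotProduct] using this
      have hone : ∑ j', P t j' * v j' = P t j * v j :=
        Finset.sum_eq_single_of_mem j (Finset.mem_univ j)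
          (fun b _ hb => by rw [hz' b hb, zero_mul])
      rw [hone] at hveq
      have : v j = 0 := by
        rcases mul_eq_zero.mp hveq with h | h
        · exact absurd h (ne_of_gt htpos)
        · exact h
      simpa using this
    have h4 := LinearMap.finrank_range_add_finrank_ker P.mulVecLin
    rw [hinj] at h4
    simp [Module.finrank_fin_fun, finrank_bot] at h4
    have hPrank : P.rank = 4 := by
      show Module.finrank ℝ (LinearMap.range P.mulVecLin) = 4
      omega
    exact ⟨hPrank, by omega⟩
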